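/- Let q be a prime power, let 1 ≤ t ≤ k ≤ n, and let V₁, V₂ be two distinct t-dimensional subspaces of F_q^n with dim(V₁ ∩ V₂) = l for some l ∈ {0, 1, …, t−1}. Then for every j ∈ {l, l+1, …, t}, the number of k-dimensional subspaces U of F_q^n such that V₁ ⊆ U and dim(U ∩ V₂) = j equals q^{(k−t−j+l)(t−j)} · [t−l choose j−l]_q · [n−2t+l choose k−t−j+l]_q. -/

import Mathlib

open Module

/-- The Gaussian (q-)binomial coefficient `[a choose b]_q` with integer arguments,
defined (in `ℚ`) by the product formula `∏_{i=0}^{b-1} (q^{a-i} − 1)/(q^{b-i} − 1)`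
when `0 ≤ b ≤ a`, and by convention `0` if `b < 0` or `b > a`. -/
def gaussBinomZ (q : ℕ) (a b : ℤ) : ℚ :=
  if 0 ≤ b ∧ b ≤ a then
    ∏ i ∈ Finset.range b.toNat, (((q : ℚ) ^ (a - i) - 1) / ((q : ℚ) ^ (b - i) - 1))
  else 0

set_option linter.unusedSectionVars false


variable {F : Type} [Field F] [Fintype F]

/-- Fiber-counting: if every fiber of `f` has cardinality `c`, then `|α| = c * |β|`. -/
lemma card_of_fibers {α β : Type*} [Finite α] [Finite β] (f : α → β) (c : ℕ)
    (h : ∀ b : β, Nat.card {a // f a = b} = c) : Nat.card α = c * Nat.card β := by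
  classical
  have := Fintype.ofFinite α; have := Fintype.ofFinite β
  calc Nat.card α = Nat.card (Σ y : β, {x // f x = y}) :=
        (Nat.card_congr (Equiv.sigmaFiberEquiv f).symm)
    _ = ∑ y : β, Nat.card {x // f x = y} := by
        simp [Nat.card_eq_fintype_card, Fintype.card_sigma]
    _ = c * Nat.card β := by
        have h' : ∀ y : β, Fintype.card {x // f x = y} = c := fun y => by
          rw [← Nat.card_eq_fintype_card]; exact h y
        simp [h', Nat.card_eq_fintype_card, mul_comm]

local notation "qq" => Fintype.card F

/-- Number of `m`-dimensional subspaces of `F^N`. -/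
noncomputable def grCard (F : Type) [Field F] [Fintype F] (N m : ℕ) : ℕ :=
  Nat.card {X : Submodule F (Fin N → F) // finrank F X = m}

lemma card_subspaces_congr {W W' : Type*} [AddCommGroup W] [Module F W]
    [AddCommGroup W'] [Module F W'] (e : W ≃ₗ[F] W') (m : ℕ) :
    Nat.card {X : Submodule F W // finrank F X = m}
      = Nat.card {X : Submodule F W' // finrank F X = m} := by
  refine Nat.card_congr ((Submodule.orderIsoMapComap e).toEquiv.subtypeEquiv fun X => ?_)
  have : finrank F (Submodule.map (e : W →ₗ[F] W') X) = finrank F X :=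
    LinearEquiv.finrank_map_eq e X
  simp [Submodule.orderIsoMapComap, Submodule.orderIsoMapComapOfBijective, LinearEquiv.finrank_map_eq]
  exact Iff.of_eq (congrArg (· = m) this.symm)

lemma grCard_eq (W : Type*) [AddCommGroup W] [Module F W] [FiniteDimensional F W] (m : ℕ) :
    Nat.card {X : Submodule F W // finrank F X = m} = grCard F (finrank F W) m :=
  card_subspaces_congr (LinearEquiv.ofFinrankEq _ _ (by simp)) m

lemma grCard_eq_zero {N m : ℕ} (h : N < m) : grCard F N m = 0 := by
  have : IsEmpty {X : Submodule F (Fin N → F) // finrank F X = m} := by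
    constructor; rintro ⟨X, hX⟩
    have h1 : finrank F X ≤ finrank F (Fin N → F) := Submodule.finrank_le X
    rw [hX, Module.finrank_pi] at h1
    simp at h1
    omega
  exact Nat.card_of_isEmpty

section TupleCount

variable {W : Type*} [AddCommGroup W] [Module F W] [FiniteDimensional F W]

/-- Independent tuples spanning a fixed `m`-dimensional `X` = independent tuples in `X`. -/
noncomputable def spanFiberEquiv (m : ℕ) (X : Submodule F W) (hX : finrank F X = m) :
    {t : Fin m → W // LinearIndependent F t ∧ Submodule.span F (Set.range t) = X} ≃
      {t : Fin m → X // LinearIndependent F t} where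
  toFun := fun ⟨t, ht, hs⟩ => ⟨fun i => ⟨t i, hs ▸ Submodule.subset_span (Set.mem_range_self i)⟩,
    LinearIndependent.of_comp X.subtype (by convert ht; rfl)⟩
  invFun := fun ⟨t, ht⟩ => ⟨X.subtype ∘ t, ht.map' X.subtype X.ker_subtype, by
    have htop : Submodule.span F (Set.range t) = ⊤ :=
      ht.span_eq_top_of_card_eq_finrank' (by simp [hX])
    rw [Set.range_comp, ← Submodule.map_span, htop, Submodule.map_top, Submodule.range_subtype]⟩
  left_inv := fun ⟨t, ht, hs⟩ => rfl
  right_inv := fun ⟨t, ht⟩ => rfl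

lemma card_subspaces_mul (m : ℕ) (hm : m ≤ finrank F W) :
    Nat.card {X : Submodule F W // finrank F X = m} * ∏ i ∈ Finset.range m, (qq ^ m - qq ^ i)
      = ∏ i ∈ Finset.range m, (qq ^ (finrank F W) - qq ^ i) := by
  have : Finite W := Module.finite_of_finite F
  have hf : ∀ t : {t : Fin m → W // LinearIndependent F t},
      finrank F (Submodule.span F (Set.range t.1)) = m := fun t => by
    rw [finrank_span_eq_card t.2, Fintype.card_fin]
  set f : {t : Fin m → W // LinearIndependent F t} → {X : Submodule F W // finrank F X = m} :=
    fun t => ⟨Submodule.span F (Set.range t.1), hf t⟩ with hfdef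
  have hfib : ∀ b, Nat.card {a // f a = b} = ∏ i ∈ Finset.range m, (qq ^ m - qq ^ i) := by
    intro b
    have e1 : {a // f a = b} ≃
        {t : Fin m → W // LinearIndependent F t ∧ Submodule.span F (Set.range t) = b.1} :=
      { toFun := fun a => ⟨a.1.1, a.1.2, congrArg Subtype.val a.2⟩
        invFun := fun t => ⟨⟨t.1, t.2.1⟩, Subtype.ext t.2.2⟩
        left_inv := fun a => rfl
        right_inv := fun t => rfl }
    rw [Nat.card_congr (e1.trans (spanFiberEquiv m b.1 b.2)),
      ← Fin.prod_univ_eq_prod_range (fun i => qq ^ m - qq ^ i) m]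
    rw [card_linearIndependent (le_of_eq b.2.symm), b.2]
  have htot := card_of_fibers f _ hfib
  rw [card_linearIndependent hm] at htot
  rw [mul_comm, ← htot, Fin.prod_univ_eq_prod_range (fun i => qq ^ (finrank F W) - qq ^ i) m]

lemma card_tuples_quot (C : Submodule F W) (d : ℕ) (hd : d ≤ finrank F (W ⧸ C)) :
    Nat.card {t : Fin d → W // LinearIndependent F (C.mkQ ∘ t)} =
      qq ^ (finrank F C * d) * ∏ i ∈ Finset.range d, (qq ^ (finrank F (W ⧸ C)) - qq ^ i) := by
  classical
  have : Finite W := Module.finite_of_finite F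
  have : Finite (W ⧸ C) := Finite.of_surjective _ (Submodule.mkQ_surjective C)
  obtain ⟨C', hC'⟩ := Submodule.exists_isCompl C
  set σ := Submodule.quotientEquivOfIsCompl C C' hC' with hσ
  set pr := C.linearProjOfIsCompl C' hC' with hpr
  set pr' := C'.linearProjOfIsCompl C hC'.symm with hpr'
  have hmk : ∀ p : (Fin d → C) × {u : Fin d → W ⧸ C // LinearIndependent F u},
      C.mkQ ∘ (fun i => (p.1 i : W) + (σ (p.2.1 i) : W)) = p.2.1 := by
    intro p; funext i
    simp [map_add, Submodule.mkQ_apply, hσ,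
      (Submodule.Quotient.mk_eq_zero _).2 (p.1 i).2,
      Submodule.mk_quotientEquivOfIsCompl_apply]
  have e2 : {t : Fin d → W // LinearIndependent F (C.mkQ ∘ t)} ≃
      (Fin d → C) × {u : Fin d → W ⧸ C // LinearIndependent F u} :=
    { toFun := fun t => (fun i => pr (t.1 i), ⟨C.mkQ ∘ t.1, t.2⟩)
      invFun := fun p => ⟨fun i => (p.1 i : W) + (σ (p.2.1 i) : W), by
        rw [hmk p]; exact p.2.2⟩
      left_inv := fun t => by
        apply Subtype.ext; funext i
        have hdec : (C.linearProjOfIsCompl C' hC' (t.1 i) : W) +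
            (C'.linearProjOfIsCompl C hC'.symm (t.1 i) : W) = t.1 i :=
          Submodule.projection_add_projection_eq_self hC' (t.1 i)
        have h0 : C.mkQ (t.1 i) = Submodule.Quotient.mk ((pr' (t.1 i) : W)) := by
          rw [Submodule.mkQ_apply, Submodule.Quotient.eq]
          rw [← hpr'] at hdec
          rw [show t.1 i - (pr' (t.1 i) : W) = (pr (t.1 i) : W) from
            sub_eq_of_eq_add hdec.symm]
          exact SetLike.coe_mem _
        show (pr (t.1 i) : W) + (σ (C.mkQ (t.1 i)) : W) = t.1 i
        rw [h0, hσ, Submodule.quotientEquivOfIsCompl_apply_mk_coe]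
        rw [← hpr'] at hdec; exact hdec
      right_inv := fun p => by
        refine Prod.ext ?_ (Subtype.ext (hmk p))
        funext i
        show pr ((p.1 i : W) + (σ (p.2.1 i) : W)) = p.1 i
        rw [map_add, hpr, Submodule.linearProjOfIsCompl, Submodule.linearProjOfIsCompl_apply_left,
          Submodule.linearProjOfIsCompl_apply_right, add_zero] }
  rw [Nat.card_congr e2, Nat.card_prod, card_linearIndependent hd]
  have hC : Nat.card (Fin d → C) = qq ^ (finrank F C * d) := by
    have : Fintype C := Fintype.ofFinite _
    rw [Nat.card_eq_fintype_card, Fintype.card_fun, card_eq_pow_finrank (K := F) (V := C),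
      Fintype.card_fin, ← pow_mul]
  rw [hC, ← Fin.prod_univ_eq_prod_range (fun i => qq ^ (finrank F (W ⧸ C)) - qq ^ i) d]

lemma prod_pos_aux (d : ℕ) : 0 < ∏ i ∈ Finset.range d, (qq ^ d - qq ^ i) := by
  apply Finset.prod_pos; intro i hi
  have hq : 1 < qq := Fintype.one_lt_card
  have := Nat.pow_lt_pow_right hq (Finset.mem_range.mp hi)
  omega

lemma span_inf_of_indep_quot {C : Submodule F W} {d : ℕ} {t : Fin d → W}
    (ht : LinearIndependent F (C.mkQ ∘ t)) :
    Submodule.span F (Set.range t) ⊓ C = ⊥ := by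
  rw [eq_bot_iff]
  rintro x hx
  rw [Submodule.mem_inf] at hx
  obtain ⟨c, hc⟩ := (Submodule.mem_span_range_iff_exists_fun F).mp hx.1
  have h0 : ∑ i, c i • ((C.mkQ ∘ t) i) = 0 := by
    have : ∑ i, c i • ((C.mkQ ∘ t) i) = C.mkQ (∑ i, c i • t i) := by
      simp [map_sum, map_smul]
    rw [this, hc, Submodule.mkQ_apply, Submodule.Quotient.mk_eq_zero]
    exact hx.2
  have hz := Fintype.linearIndependent_iff.mp ht c h0
  rw [Submodule.mem_bot, ← hc]
  simp [hz]

lemma card_avoid (C : Submodule F W) (d : ℕ) :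
    Nat.card {Y : Submodule F W // finrank F Y = d ∧ Y ⊓ C = ⊥}
      = qq ^ (finrank F C * d) * grCard F (finrank F (W ⧸ C)) d := by
  classical
  have hW : Finite W := Module.finite_of_finite F
  by_cases hd : d ≤ finrank F (W ⧸ C)
  case neg =>
    push_neg at hd
    rw [grCard_eq_zero hd, mul_zero, Nat.card_eq_zero]
    left
    constructor; rintro ⟨Y, hY, hYC⟩
    have h1 := Submodule.finrank_sup_add_finrank_inf_eq Y C
    rw [hYC] at h1
    simp only [finrank_bot, add_zero] at h1
    have h2 := Submodule.finrank_quotient_add_finrank C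
    have h3 : finrank F (Y ⊔ C : Submodule F W) ≤ finrank F W := Submodule.finrank_le _
    omega
  case pos =>
    have hf1 : ∀ t : {t : Fin d → W // LinearIndependent F (C.mkQ ∘ t)},
        finrank F (Submodule.span F (Set.range t.1)) = d := fun t => by
      rw [finrank_span_eq_card (t.2.of_comp C.mkQ), Fintype.card_fin]
    set f : {t : Fin d → W // LinearIndependent F (C.mkQ ∘ t)} →
        {Y : Submodule F W // finrank F Y = d ∧ Y ⊓ C = ⊥} := fun t =>
      ⟨Submodule.span F (Set.range t.1), hf1 t, span_inf_of_indep_quot t.2⟩ with hfdef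
    have hfib : ∀ b, Nat.card {a // f a = b} = ∏ i ∈ Finset.range d, (qq ^ d - qq ^ i) := by
      intro b
      have e1 : {a // f a = b} ≃
          {t : Fin d → W // LinearIndependent F (C.mkQ ∘ t) ∧
            Submodule.span F (Set.range t) = b.1} :=
        { toFun := fun a => ⟨a.1.1, a.1.2, congrArg Subtype.val a.2⟩
          invFun := fun t => ⟨⟨t.1, t.2.1⟩, Subtype.ext t.2.2⟩
          left_inv := fun a => rfl
          right_inv := fun t => rfl }
      have e2 : {t : Fin d → W // LinearIndependent F (C.mkQ ∘ t) ∧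
            Submodule.span F (Set.range t) = b.1} ≃
          {t : Fin d → W // LinearIndependent F t ∧
            Submodule.span F (Set.range t) = b.1} := by
        refine Equiv.subtypeEquivRight fun t => ?_
        constructor
        · exact fun h => ⟨h.1.of_comp C.mkQ, h.2⟩
        · rintro ⟨h1, h2⟩
          refine ⟨h1.map ?_, h2⟩
          rw [Submodule.ker_mkQ, h2, disjoint_iff]
          exact b.2.2
      rw [Nat.card_congr (e1.trans (e2.trans (spanFiberEquiv d b.1 b.2.1))),
        ← Fin.prod_univ_eq_prod_range (fun i => qq ^ d - qq ^ i) d]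
      rw [card_linearIndependent (le_of_eq b.2.1.symm), b.2.1]
    have htot := card_of_fibers f _ hfib
    rw [card_tuples_quot C d hd] at htot
    have hgr := card_subspaces_mul (W := Fin (finrank F (W ⧸ C)) → F) d
      (by rw [Module.finrank_pi]; simpa using hd)
    rw [show finrank F (Fin (finrank F (W ⧸ C)) → F) = finrank F (W ⧸ C) by
      rw [Module.finrank_pi]; simp] at hgr
    rw [← grCard] at hgr
    refine Nat.eq_of_mul_eq_mul_right (prod_pos_aux (F := F) d) ?_
    calc Nat.card {Y : Submodule F W // finrank F Y = d ∧ Y ⊓ C = ⊥}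
          * ∏ i ∈ Finset.range d, (qq ^ d - qq ^ i)
        = qq ^ (finrank F C * d) * ∏ i ∈ Finset.range d, (qq ^ (finrank F (W ⧸ C)) - qq ^ i) := by
          rw [mul_comm]; exact htot.symm
      _ = qq ^ (finrank F C * d) * (grCard F (finrank F (W ⧸ C)) d
            * ∏ i ∈ Finset.range d, (qq ^ d - qq ^ i)) := by rw [hgr]
      _ = qq ^ (finrank F C * d) * grCard F (finrank F (W ⧸ C)) d
            * ∏ i ∈ Finset.range d, (qq ^ d - qq ^ i) := by rw [mul_assoc]

lemma finrank_map_mkQ_add (S B : Submodule F W) (h : S ≤ B) :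
    finrank F (B.map S.mkQ) + finrank F S = finrank F B := by
  have hr := LinearMap.finrank_range_add_finrank_ker (S.mkQ.comp B.subtype)
  rw [LinearMap.range_comp, Submodule.range_subtype] at hr
  rw [LinearMap.ker_comp, Submodule.ker_mkQ] at hr
  rw [← hr]
  congr 1
  exact (LinearEquiv.finrank_eq (Submodule.comapSubtypeEquivOfLe h)).symm

lemma finrank_map_mkQ_add_inf (S B : Submodule F W) :
    finrank F (B.map S.mkQ) + finrank F ↥(B ⊓ S) = finrank F B := by
  have hr := LinearMap.finrank_range_add_finrank_ker (S.mkQ.comp B.subtype)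
  rw [LinearMap.range_comp, Submodule.range_subtype, LinearMap.ker_comp,
    Submodule.ker_mkQ] at hr
  rw [← hr]
  congr 1
  have hc : Submodule.comap B.subtype S = Submodule.comap B.subtype (B ⊓ S) := by
    ext x
    simp [Submodule.mem_comap, Submodule.mem_inf, x.2]
  rw [hc]
  exact (LinearEquiv.finrank_eq (Submodule.comapSubtypeEquivOfLe inf_le_left)).symm

lemma map_mkQ_inf (S X B : Submodule F W) (hSX : S ≤ X) (hSB : S ≤ B) :
    X.map S.mkQ ⊓ B.map S.mkQ = (X ⊓ B).map S.mkQ := by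
  have h1 : Submodule.comap S.mkQ (X.map S.mkQ ⊓ B.map S.mkQ) = X ⊓ B := by
    rw [Submodule.comap_inf, Submodule.comap_map_eq, Submodule.comap_map_eq,
      Submodule.ker_mkQ, sup_of_le_left hSX, sup_of_le_left hSB]
  rw [← h1, Submodule.map_comap_eq_of_surjective (Submodule.mkQ_surjective S)]

lemma card_fixed_inter (B S : Submodule F W) (hSB : S ≤ B) {s m : ℕ}
    (hs : finrank F S = s) (hsm : s ≤ m) :
    Nat.card {X : Submodule F W // finrank F X = m ∧ X ⊓ B = S}
      = qq ^ ((finrank F B - s) * (m - s))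
        * grCard F (finrank F W - finrank F B) (m - s) := by
  classical
  have hsurj := Submodule.mkQ_surjective S
  have hB'rank : finrank F (B.map S.mkQ) + s = finrank F B := by
    rw [← hs]; exact finrank_map_mkQ_add S B hSB
  have hBle : finrank F B ≤ finrank F W := Submodule.finrank_le B
  have hquot : finrank F (W ⧸ S) + s = finrank F W := by
    rw [← hs]; exact Submodule.finrank_quotient_add_finrank S
  have e : {X : Submodule F W // finrank F X = m ∧ X ⊓ B = S} ≃
      {Y : Submodule F (W ⧸ S) // finrank F Y = m - s ∧ Y ⊓ B.map S.mkQ = ⊥} := by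
    refine { toFun := fun X => ⟨X.1.map S.mkQ, ?_, ?_⟩,
             invFun := fun Y => ⟨Y.1.comap S.mkQ, ?_, ?_⟩, left_inv := ?_, right_inv := ?_ }
    · have hSX : S ≤ X.1 := by
        have h0 : X.1 ⊓ B ≤ X.1 := inf_le_left
        rwa [X.2.2] at h0
      have h1 := finrank_map_mkQ_add S X.1 hSX
      rw [hs, X.2.1] at h1
      omega
    · have hSX : S ≤ X.1 := by
        have h0 : X.1 ⊓ B ≤ X.1 := inf_le_left
        rwa [X.2.2] at h0
      rw [map_mkQ_inf S X.1 B hSX hSB, X.2.2]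
      rw [eq_bot_iff]
      rintro x hx
      obtain ⟨y, hy, rfl⟩ := hx
      rw [Submodule.mem_bot, Submodule.mkQ_apply, Submodule.Quotient.mk_eq_zero]
      exact hy
    · have hSc : S ≤ Y.1.comap S.mkQ := fun x hx => by
        simp [Submodule.mem_comap, Submodule.mkQ_apply,
          (Submodule.Quotient.mk_eq_zero S).2 hx]
      have h1 := finrank_map_mkQ_add S (Y.1.comap S.mkQ) hSc
      rw [Submodule.map_comap_eq_of_surjective hsurj, hs, Y.2.1] at h1
      have hY1 : finrank F Y.1 ≤ finrank F (W ⧸ S) := Submodule.finrank_le _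
      rw [Y.2.1] at hY1
      omega
    · apply le_antisymm
      · rintro x hx
        rw [Submodule.mem_inf] at hx
        have hmk : S.mkQ x ∈ Y.1 ⊓ B.map S.mkQ := ⟨hx.1, Submodule.mem_map_of_mem hx.2⟩
        rw [Y.2.2, Submodule.mem_bot] at hmk
        rwa [Submodule.mkQ_apply, Submodule.Quotient.mk_eq_zero] at hmk
      · refine le_inf ?_ hSB
        intro x hx
        simp [Submodule.mem_comap, Submodule.mkQ_apply,
          (Submodule.Quotient.mk_eq_zero S).2 hx]
    · rintro ⟨X, hX1, hX2⟩
      apply Subtype.ext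
      show (X.map S.mkQ).comap S.mkQ = X
      rw [Submodule.comap_map_eq, Submodule.ker_mkQ,
        sup_of_le_left (by rw [← hX2]; exact inf_le_left : S ≤ X)]
    · rintro ⟨Y, hY1, hY2⟩
      apply Subtype.ext
      show (Y.comap S.mkQ).map S.mkQ = Y
      exact Submodule.map_comap_eq_of_surjective hsurj Y
  rw [Nat.card_congr e, card_avoid (B.map S.mkQ) (m - s)]
  have h2 := Submodule.finrank_quotient_add_finrank (B.map S.mkQ)
  rw [show finrank F (B.map S.mkQ) = finrank F B - s by omega,
    show finrank F ((W ⧸ S) ⧸ B.map S.mkQ) = finrank F W - finrank F B by omega]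

lemma card_inter_dim (B : Submodule F W) {b s m : ℕ} (hb : finrank F B = b) (hsm : s ≤ m) :
    Nat.card {X : Submodule F W // finrank F X = m ∧ finrank F ↥(X ⊓ B) = s}
      = (qq ^ ((b - s) * (m - s)) * grCard F (finrank F W - b) (m - s)) * grCard F b s := by
  classical
  have hW : Finite W := Module.finite_of_finite F
  set f : {X : Submodule F W // finrank F X = m ∧ finrank F ↥(X ⊓ B) = s} →
      {S : Submodule F W // S ≤ B ∧ finrank F S = s} := fun X =>
    ⟨X.1 ⊓ B, inf_le_right, X.2.2⟩ with hfdef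
  have hfib : ∀ S, Nat.card {a // f a = S}
      = qq ^ ((b - s) * (m - s)) * grCard F (finrank F W - b) (m - s) := by
    intro S
    have e1 : {a // f a = S} ≃ {X : Submodule F W // finrank F X = m ∧ X ⊓ B = S.1} :=
      { toFun := fun a => ⟨a.1.1, a.1.2.1, congrArg Subtype.val a.2⟩
        invFun := fun X => ⟨⟨X.1, X.2.1, by rw [X.2.2]; exact S.2.2⟩, Subtype.ext X.2.2⟩
        left_inv := fun a => rfl
        right_inv := fun X => rfl }
    rw [Nat.card_congr e1, card_fixed_inter B S.1 S.2.1 S.2.2 hsm, hb]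
  have hbase : Nat.card {S : Submodule F W // S ≤ B ∧ finrank F S = s} = grCard F b s := by
    have e2 : {S : Submodule F W // S ≤ B ∧ finrank F S = s} ≃
        {S' : Submodule F B // finrank F S' = s} :=
      { toFun := fun S => ⟨S.1.comap B.subtype, by
          rw [(Submodule.comapSubtypeEquivOfLe S.2.1).finrank_eq]; exact S.2.2⟩
        invFun := fun S' => ⟨S'.1.map B.subtype, Submodule.map_subtype_le B S'.1, by
          rw [Submodule.finrank_map_subtype_eq]; exact S'.2⟩
        left_inv := fun S => by
          apply Subtype.ext
          show (S.1.comap B.subtype).map B.subtype = S.1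
          rw [Submodule.map_comap_subtype, inf_eq_right.2 S.2.1]
        right_inv := fun S' => by
          apply Subtype.ext
          show (S'.1.map B.subtype).comap B.subtype = S'.1
          rw [Submodule.comap_map_eq, Submodule.ker_subtype, sup_bot_eq] }
    rw [Nat.card_congr e2, grCard_eq (F := F) (W := B), hb]
  rw [card_of_fibers f _ hfib, hbase]

end TupleCount

lemma grCard_cast (a b : ℕ) (hba : b ≤ a) :
    (grCard F a b : ℚ) = gaussBinomZ (Fintype.card F) a b := by
  have hq : (1:ℕ) < qq := Fintype.one_lt_card
  have hqQ : (1:ℚ) < (qq:ℚ) := by exact_mod_cast hq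
  have key : grCard F a b * ∏ i ∈ Finset.range b, (qq ^ b - qq ^ i)
      = ∏ i ∈ Finset.range b, (qq ^ a - qq ^ i) := by
    have h := card_subspaces_mul (F := F) (W := Fin a → F) b
      (by rw [Module.finrank_pi, Fintype.card_fin]; exact hba)
    rw [show finrank F (Fin a → F) = a from by rw [Module.finrank_pi, Fintype.card_fin]] at h
    exact h
  have cast_prod : ∀ c : ℕ, b ≤ c → ((∏ i ∈ Finset.range b, (qq ^ c - qq ^ i) : ℕ) : ℚ)
      = ∏ i ∈ Finset.range b, ((qq:ℚ) ^ c - (qq:ℚ) ^ i) := by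
    intro c hc
    rw [Nat.cast_prod]
    refine Finset.prod_congr rfl fun i hi => ?_
    have hi' := Finset.mem_range.mp hi
    rw [Nat.cast_sub (Nat.pow_le_pow_right (by omega) (by omega))]
    push_cast; ring
  have keyQ : (grCard F a b : ℚ) * ∏ i ∈ Finset.range b, ((qq:ℚ) ^ b - (qq:ℚ) ^ i)
      = ∏ i ∈ Finset.range b, ((qq:ℚ) ^ a - (qq:ℚ) ^ i) := by
    rw [← cast_prod a hba, ← cast_prod b le_rfl, ← Nat.cast_mul, key]
  have hden : ∀ i ∈ Finset.range b, ((qq:ℚ) ^ b - (qq:ℚ) ^ i) ≠ 0 := by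
    intro i hi
    have hi' := Finset.mem_range.mp hi
    have : (qq:ℚ) ^ i < (qq:ℚ) ^ b := pow_lt_pow_right₀ hqQ hi'
    intro hcon
    nlinarith
  have hdenprod : (∏ i ∈ Finset.range b, ((qq:ℚ) ^ b - (qq:ℚ) ^ i)) ≠ 0 :=
    Finset.prod_ne_zero_iff.mpr hden
  rw [gaussBinomZ, if_pos ⟨Int.natCast_nonneg b, by exact_mod_cast hba⟩]
  rw [show ((b:ℤ)).toNat = b from Int.toNat_natCast b]
  rw [eq_comm]
  have hterm : ∀ i ∈ Finset.range b,
      ((qq : ℚ) ^ ((a:ℤ) - i) - 1) / ((qq : ℚ) ^ ((b:ℤ) - i) - 1)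
        = ((qq:ℚ) ^ a - (qq:ℚ) ^ i) / ((qq:ℚ) ^ b - (qq:ℚ) ^ i) := by
    intro i hi
    have hi' := Finset.mem_range.mp hi
    have hqne : ((qq:ℚ)) ^ i ≠ 0 := pow_ne_zero i (by positivity)
    have hza : (qq : ℚ) ^ ((a:ℤ) - i) = (qq:ℚ) ^ (a - i : ℕ) := by
      rw [show (a:ℤ) - i = ((a - i : ℕ) : ℤ) by omega, zpow_natCast]
    have hzb : (qq : ℚ) ^ ((b:ℤ) - i) = (qq:ℚ) ^ (b - i : ℕ) := by
      rw [show (b:ℤ) - i = ((b - i : ℕ) : ℤ) by omega, zpow_natCast]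
    have hna : (qq:ℚ) ^ a - (qq:ℚ) ^ i = (qq:ℚ) ^ i * ((qq:ℚ) ^ (a - i : ℕ) - 1) := by
      rw [mul_sub, mul_one, ← pow_add]
      congr 2
      omega
    have hnb : (qq:ℚ) ^ b - (qq:ℚ) ^ i = (qq:ℚ) ^ i * ((qq:ℚ) ^ (b - i : ℕ) - 1) := by
      rw [mul_sub, mul_one, ← pow_add]
      congr 2
      omega
    rw [hza, hzb, hna, hnb, mul_div_mul_left _ _ hqne]
  rw [Finset.prod_congr rfl hterm, Finset.prod_div_distrib]
  rw [div_eq_iff hdenprod]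
  exact keyQ.symm

lemma gaussBinomZ_neg {q : ℕ} {a b : ℤ} (h : ¬ (0 ≤ b ∧ b ≤ a)) : gaussBinomZ q a b = 0 :=
  if_neg h


/-- Let `q` be a prime power (realized as the cardinality of a finite
field `F`), let `1 ≤ t ≤ k ≤ n`, and let `V₁, V₂` be two distinct `t`-dimensional
subspaces of `F_q^n` with `dim(V₁ ∩ V₂) = l`, where `0 ≤ l ≤ t−1`.  Then for every
`j` with `l ≤ j ≤ t`, the number of `k`-dimensional subspaces `U` of `F_q^n` with
`V₁ ⊆ U` and `dim(U ∩ V₂) = j` equals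
`q^{(k−t−j+l)(t−j)} · [t−l choose j−l]_q · [n−2t+l choose k−t−j+l]_q`. -/
theorem count_subspaces_prescribed_intersection
    (F : Type) [Field F] [Fintype F] (q t k n l j : ℕ)
    (hq : q = Fintype.card F) (ht : 1 ≤ t) (htk : t ≤ k) (hkn : k ≤ n)
    (V₁ V₂ : Submodule F (Fin n → F)) (hne : V₁ ≠ V₂)
    (hV₁ : finrank F V₁ = t) (hV₂ : finrank F V₂ = t)
    (hl : finrank F ↥(V₁ ⊓ V₂) = l) (hlt : l ≤ t - 1)
    (hlj : l ≤ j) (hjt : j ≤ t) :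
    (Nat.card {U : Submodule F (Fin n → F) //
        V₁ ≤ U ∧ finrank F U = k ∧ finrank F ↥(U ⊓ V₂) = j} : ℚ) =
      (q : ℚ) ^ (((k : ℤ) - t - j + l) * ((t : ℤ) - j)) *
        gaussBinomZ q ((t : ℤ) - l) ((j : ℤ) - l) *
        gaussBinomZ q ((n : ℤ) - 2 * t + l) ((k : ℤ) - t - j + l) := by
  subst hq
  have hWrank : finrank F (Fin n → F) = n := by rw [Module.finrank_pi, Fintype.card_fin]
  set B : Submodule F ((Fin n → F) ⧸ V₁) := V₂.map V₁.mkQ with hB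
  have hBrank : finrank F B + l = t := by
    have h := finrank_map_mkQ_add_inf V₁ V₂
    rw [show V₂ ⊓ V₁ = V₁ ⊓ V₂ from inf_comm V₂ V₁, hl, hV₂] at h
    exact h
  have hQrank : finrank F ((Fin n → F) ⧸ V₁) + t = n := by
    have h := Submodule.finrank_quotient_add_finrank V₁
    rw [hV₁, hWrank] at h
    exact h
  have hBle : finrank F B ≤ finrank F ((Fin n → F) ⧸ V₁) := Submodule.finrank_le B
  have hkey : ∀ U : Submodule F (Fin n → F), V₁ ≤ U →
      finrank F ↥(U.map V₁.mkQ ⊓ B) + l = finrank F ↥(U ⊓ V₂) := by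
    intro U hU
    have hmap : U.map V₁.mkQ ⊓ B = ((U ⊓ V₂) ⊔ V₁).map V₁.mkQ := by
      have h1 : Submodule.comap V₁.mkQ (U.map V₁.mkQ ⊓ B) = U ⊓ (V₂ ⊔ V₁) := by
        rw [hB, Submodule.comap_inf, Submodule.comap_map_eq, Submodule.comap_map_eq,
          Submodule.ker_mkQ, sup_of_le_left hU]
      have h2 : U ⊓ (V₂ ⊔ V₁) = (U ⊓ V₂) ⊔ V₁ := (inf_sup_assoc_of_le V₂ hU).symm
      rw [← Submodule.map_comap_eq_of_surjective (Submodule.mkQ_surjective V₁)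
        (U.map V₁.mkQ ⊓ B), h1, h2]
    rw [hmap]
    have h3 := finrank_map_mkQ_add V₁ ((U ⊓ V₂) ⊔ V₁) le_sup_right
    have h4 := Submodule.finrank_sup_add_finrank_inf_eq (U ⊓ V₂) V₁
    have h5 : (U ⊓ V₂) ⊓ V₁ = V₁ ⊓ V₂ := by
      rw [inf_comm (U ⊓ V₂) V₁, ← inf_assoc, inf_eq_left.2 hU]
    rw [h5, hl, hV₁] at h4
    rw [hV₁] at h3
    omega
  by_cases hcase : t + j ≤ k + l
  case neg =>
    have hE : IsEmpty {U : Submodule F (Fin n → F) //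
        V₁ ≤ U ∧ finrank F U = k ∧ finrank F ↥(U ⊓ V₂) = j} := by
      constructor
      rintro ⟨U, hU1, hU2, hU3⟩
      have h1 := Submodule.finrank_sup_add_finrank_inf_eq V₁ (U ⊓ V₂)
      have h2 : V₁ ⊓ (U ⊓ V₂) = V₁ ⊓ V₂ := by rw [← inf_assoc, inf_eq_left.2 hU1]
      have h3 : V₁ ⊔ (U ⊓ V₂) ≤ U := sup_le hU1 inf_le_left
      have h4 := Submodule.finrank_mono h3
      rw [h2, hl, hV₁, hU3] at h1
      rw [hU2] at h4
      omega
    have hzero : gaussBinomZ (Fintype.card F) ((n : ℤ) - 2 * t + l)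
        ((k : ℤ) - t - j + l) = 0 := by
      apply gaussBinomZ_neg
      rintro ⟨h1, -⟩
      omega
    rw [@Nat.card_of_isEmpty _ hE, hzero, mul_zero, Nat.cast_zero]
  case pos =>
    have hsm : j - l ≤ k - t := by omega
    have hBrank' : finrank F B = t - l := by omega
    have e : {U : Submodule F (Fin n → F) //
        V₁ ≤ U ∧ finrank F U = k ∧ finrank F ↥(U ⊓ V₂) = j} ≃
        {Y : Submodule F ((Fin n → F) ⧸ V₁) //
          finrank F Y = k - t ∧ finrank F ↥(Y ⊓ B) = j - l} := by
      refine { toFun := fun U => ⟨U.1.map V₁.mkQ, ?_, ?_⟩,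
               invFun := fun Y => ⟨Y.1.comap V₁.mkQ, ?_, ?_, ?_⟩,
               left_inv := ?_, right_inv := ?_ }
      · have h1 := finrank_map_mkQ_add V₁ U.1 U.2.1
        rw [hV₁, U.2.2.1] at h1
        omega
      · have h1 := hkey U.1 U.2.1
        rw [U.2.2.2] at h1
        omega
      · intro x hx
        simp [Submodule.mem_comap, Submodule.mkQ_apply,
          (Submodule.Quotient.mk_eq_zero V₁).2 hx]
      · have hUc : V₁ ≤ Y.1.comap V₁.mkQ := fun x hx => by
          simp [Submodule.mem_comap, Submodule.mkQ_apply,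
            (Submodule.Quotient.mk_eq_zero V₁).2 hx]
        have h1 := finrank_map_mkQ_add V₁ (Y.1.comap V₁.mkQ) hUc
        rw [Submodule.map_comap_eq_of_surjective (Submodule.mkQ_surjective V₁),
          hV₁, Y.2.1] at h1
        have h2 : finrank F Y.1 ≤ finrank F ((Fin n → F) ⧸ V₁) := Submodule.finrank_le _
        omega
      · have hUc : V₁ ≤ Y.1.comap V₁.mkQ := fun x hx => by
          simp [Submodule.mem_comap, Submodule.mkQ_apply,
            (Submodule.Quotient.mk_eq_zero V₁).2 hx]
        have h1 := hkey (Y.1.comap V₁.mkQ) hUc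
        rw [Submodule.map_comap_eq_of_surjective (Submodule.mkQ_surjective V₁),
          Y.2.2] at h1
        omega
      · rintro ⟨U, hU1, hU2, hU3⟩
        apply Subtype.ext
        show (U.map V₁.mkQ).comap V₁.mkQ = U
        rw [Submodule.comap_map_eq, Submodule.ker_mkQ, sup_of_le_left hU1]
      · rintro ⟨Y, hY1, hY2⟩
        apply Subtype.ext
        show (Y.comap V₁.mkQ).map V₁.mkQ = Y
        exact Submodule.map_comap_eq_of_surjective (Submodule.mkQ_surjective V₁) Y
    rw [Nat.card_congr e, card_inter_dim B hBrank' hsm]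
    rw [show finrank F ((Fin n → F) ⧸ V₁) = n - t by omega]
    have hint1 : (t : ℤ) - l = ((t - l : ℕ) : ℤ) := by omega
    have hint2 : (j : ℤ) - l = ((j - l : ℕ) : ℤ) := by omega
    have hint3 : (k : ℤ) - t - j + l = (((k - t) - (j - l) : ℕ) : ℤ) := by omega
    have hint4 : (n : ℤ) - 2 * t + l = (((n - t) - (t - l) : ℕ) : ℤ) := by omega
    have hexp : ((k : ℤ) - t - j + l) * ((t : ℤ) - j)
        = ((((t - l) - (j - l)) * ((k - t) - (j - l)) : ℕ) : ℤ) := by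
      rw [hint3, show (t : ℤ) - j = (((t - l) - (j - l) : ℕ) : ℤ) by omega]
      push_cast
      ring
    rw [hexp, hint1, hint2, hint3, hint4, zpow_natCast]
    rw [← grCard_cast (t - l) (j - l) (by omega)]
    by_cases h2 : (k - t) - (j - l) ≤ (n - t) - (t - l)
    · rw [← grCard_cast ((n - t) - (t - l)) ((k - t) - (j - l)) h2]
      push_cast
      ring
    · rw [grCard_eq_zero (by omega), gaussBinomZ_neg (by
        rintro ⟨-, hc⟩
        omega )]
      push_cast
      ring
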